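/- For the Euler-kernel approximation problem under the normalized error criterion, the problem is strongly polynomially tractable if and only if liminf_{k→∞} r_k/ln k > 0, and in that case the exponent of SPT is p* = max{2/A_*, 1/(r_1+1)}, where A_* = 2 ln 3 · liminf_{k→∞} r_k/ln k. -/

import Mathlib

open Filter Real Set

/-- Information complexity: the number of multi-indices `(j₁,…,j_d) ∈ ℕ^d`
(here 0-indexed, so `Λ k j` stands for `λ(k+1, j+1)`) whose eigenvalue product exceeds `ε²`. -/
noncomputable def infoCount (Λ : ℕ → ℕ → ℝ) (d : ℕ) (ε : ℝ) : ℕ :=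
  Nat.card {j : Fin d → ℕ | ε ^ 2 < ∏ k : Fin d, Λ k.val (j k)}

/-- Strong polynomial tractability. -/
def IsSPT (Λ : ℕ → ℕ → ℝ) : Prop :=
  ∃ C p : ℝ, 0 ≤ C ∧ 0 ≤ p ∧ ∀ d : ℕ, 1 ≤ d → ∀ ε : ℝ, ε ∈ Set.Ioo (0 : ℝ) 1 →
    (infoCount Λ d ε : ℝ) ≤ C * ε ^ (-p)

/-- The exponent `p*` of strong polynomial tractability. -/
noncomputable def sptExponent (Λ : ℕ → ℕ → ℝ) : ℝ :=
  sInf {p : ℝ | 0 ≤ p ∧ ∃ C : ℝ, 0 ≤ C ∧ ∀ d : ℕ, 1 ≤ d → ∀ ε : ℝ, ε ∈ Set.Ioo (0 : ℝ) 1 →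
    (infoCount Λ d ε : ℝ) ≤ C * ε ^ (-p)}

/-- Polynomial tractability. -/
def IsPT (Λ : ℕ → ℕ → ℝ) : Prop :=
  ∃ C p q : ℝ, 0 ≤ C ∧ 0 ≤ p ∧ 0 ≤ q ∧ ∀ d : ℕ, 1 ≤ d → ∀ ε : ℝ, ε ∈ Set.Ioo (0 : ℝ) 1 →
    (infoCount Λ d ε : ℝ) ≤ C * (d : ℝ) ^ q * ε ^ (-p)

/-- Quasi-polynomial tractability. -/
def IsQPT (Λ : ℕ → ℕ → ℝ) : Prop :=
  ∃ C t : ℝ, 0 < C ∧ 0 < t ∧ ∀ d : ℕ, 1 ≤ d → ∀ ε : ℝ, ε ∈ Set.Ioo (0 : ℝ) 1 →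
    (infoCount Λ d ε : ℝ) ≤ C * Real.exp (t * (1 + Real.log d) * (1 + Real.log ε⁻¹))

/-- The exponent `t*` of quasi-polynomial tractability. -/
noncomputable def qptExponent (Λ : ℕ → ℕ → ℝ) : ℝ :=
  sInf {t : ℝ | 0 < t ∧ ∃ C : ℝ, 0 < C ∧ ∀ d : ℕ, 1 ≤ d → ∀ ε : ℝ, ε ∈ Set.Ioo (0 : ℝ) 1 →
    (infoCount Λ d ε : ℝ) ≤ C * Real.exp (t * (1 + Real.log d) * (1 + Real.log ε⁻¹))}

/-- The filter describing `ε⁻¹ + d → ∞` over pairs `(ε, d)` with `ε ∈ (0,1)` and `d ≥ 1`. -/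
noncomputable def wtFilter : Filter (ℝ × ℕ) :=
  (Filter.comap (fun p : ℝ × ℕ => p.1⁻¹ + (p.2 : ℝ)) Filter.atTop) ⊓
    Filter.principal {p : ℝ × ℕ | p.1 ∈ Set.Ioo (0 : ℝ) 1 ∧ 1 ≤ p.2}

/-- `(s,t)`-weak tractability: `ln n(ε,d) / (ε^{-s} + d^t) → 0` as `ε⁻¹ + d → ∞`. -/
def IsWT (Λ : ℕ → ℕ → ℝ) (s t : ℝ) : Prop :=
  Filter.Tendsto
    (fun p : ℝ × ℕ => Real.log (infoCount Λ p.2 p.1) / (p.1 ^ (-s) + (p.2 : ℝ) ^ t))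
    wtFilter (nhds 0)

/-- Uniform weak tractability. -/
def IsUWT (Λ : ℕ → ℕ → ℝ) : Prop := ∀ s t : ℝ, 0 < s → 0 < t → IsWT Λ s t

/-- The problem suffers from the curse of dimensionality. -/
def SuffersCurse (Λ : ℕ → ℕ → ℝ) : Prop :=
  ∃ C ε₀ α : ℝ, 0 < C ∧ 0 < ε₀ ∧ 0 < α ∧ ∀ ε : ℝ, 0 < ε → ε ≤ ε₀ →
    {d : ℕ | C * (1 + α) ^ d ≤ (infoCount Λ d ε : ℝ)}.Infinite

/-- Condition (3) of Property (P) for a given `τ > 0`: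
`H(k,τ) = ∑_{j≥2} (λ(k,j)/λ(k,2))^τ` is finite for each `k` and
`sup_k H(k,τ) = H(1,τ)` (equivalently `H(k,τ) ≤ H(1,τ)` for all `k`). -/
def Cond3 (Λ : ℕ → ℕ → ℝ) (τ : ℝ) : Prop :=
  0 < τ ∧ (∀ k, Summable fun j : ℕ => (Λ k (j + 1) / Λ k 1) ^ τ) ∧
    ∀ k, (∑' j : ℕ, (Λ k (j + 1) / Λ k 1) ^ τ) ≤ ∑' j : ℕ, (Λ 0 (j + 1) / Λ 0 1) ^ τ

/-- `τ₀`: the infimum of all `τ` satisfying Condition (3). -/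
noncomputable def tau0 (Λ : ℕ → ℕ → ℝ) : ℝ := sInf {τ : ℝ | Cond3 Λ τ}

/-- Property (P): each sequence `λ(k,·)` is nonincreasing and nonnegative with `λ(k,1) = 1`
and `λ(k,2) > 0`, `h_k = λ(k,2)` is nonincreasing, and Condition (3) holds for some `τ > 0`. -/
structure PropertyP (Λ : ℕ → ℕ → ℝ) : Prop where
  nonneg : ∀ k j, 0 ≤ Λ k j
  anti : ∀ k, Antitone (Λ k)
  first : ∀ k, Λ k 0 = 1
  second_pos : ∀ k, 0 < Λ k 1
  h_anti : Antitone fun k => Λ k 1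
  cond3 : ∃ τ : ℝ, Cond3 Λ τ


/-- Normalized eigenvalues of the Euler-kernel problem: `λ(k,j)/λ(k,1) = (2j-1)^{-(2r_k+2)}`
(0-indexed: `eulerLam r k j = (2(j+1)-1)^{-(2 r_{k+1} + 2)}`). -/
noncomputable def eulerLam (r : ℕ → ℕ) (k j : ℕ) : ℝ :=
  ((2 * (j : ℝ) + 1) ^ (2 * r k + 2))⁻¹

section EulerAux
variable (r : ℕ → ℕ)

lemma eulerLam_pos (k j : ℕ) : 0 < eulerLam r k j := by unfold eulerLam; positivity

lemma one_le_base (j : ℕ) : (1:ℝ) ≤ 2 * (j:ℝ) + 1 := by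
  have := Nat.cast_nonneg (α := ℝ) j; linarith

lemma eulerLam_le_one (k j : ℕ) : eulerLam r k j ≤ 1 := by
  unfold eulerLam
  rw [inv_le_one_iff₀]
  right
  exact one_le_pow₀ (one_le_base j)

lemma eulerLam_zero (k : ℕ) : eulerLam r k 0 = 1 := by simp [eulerLam]

lemma eulerLam_one (k : ℕ) : eulerLam r k 1 = (((3:ℝ)) ^ (2 * r k + 2))⁻¹ := by
  norm_num [eulerLam]

lemma prod_le_factor {d : ℕ} (j : Fin d → ℕ) (k : Fin d) :
    ∏ i : Fin d, eulerLam r i.val (j i) ≤ eulerLam r k.val (j k) := by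
  rw [← Finset.mul_prod_erase Finset.univ _ (Finset.mem_univ k)]
  calc eulerLam r k.val (j k) * ∏ i ∈ Finset.univ.erase k, eulerLam r i.val (j i)
      ≤ eulerLam r k.val (j k) * 1 := by
        gcongr
        · exact (eulerLam_pos r _ _).le
        · exact Finset.prod_le_one (fun i _ => (eulerLam_pos r _ _).le)
            (fun i _ => eulerLam_le_one r _ _)
    _ = eulerLam r k.val (j k) := mul_one _

lemma euler_set_subset (d : ℕ) {ε : ℝ} (hε : 0 < ε) :
    {j : Fin d → ℕ | ε ^ 2 < ∏ k : Fin d, eulerLam r k.val (j k)} ⊆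
      ↑(Fintype.piFinset fun _ : Fin d => Finset.range (Nat.ceil ((ε^2)⁻¹))) := by
  intro j hj
  simp only [Set.mem_setOf_eq] at hj
  simp only [Finset.coe_sort_coe, Finset.mem_coe, Fintype.mem_piFinset, Finset.mem_range]
  intro k
  have h1 : ε ^ 2 < eulerLam r k.val (j k) := lt_of_lt_of_le hj (prod_le_factor r j k)
  have h2 : eulerLam r k.val (j k) ≤ ((j k : ℝ) + 1)⁻¹ := by
    unfold eulerLam
    apply inv_anti₀ (by positivity)
    have hcast : (0:ℝ) ≤ (j k : ℝ) := Nat.cast_nonneg _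
    calc ((j k : ℝ) + 1) ≤ 2 * (j k : ℝ) + 1 := by linarith
      _ ≤ (2 * (j k : ℝ) + 1) ^ (2 * r k.val + 2) :=
          le_self_pow₀ (one_le_base _) (by omega)
  have h3 : (j k : ℝ) < (ε ^ 2)⁻¹ := by
    have hε2 : (0:ℝ) < ε ^ 2 := by positivity
    have hj1 : (0:ℝ) < (j k : ℝ) + 1 := by positivity
    have h5 : ((j k : ℝ) + 1) < (ε ^ 2)⁻¹ :=
      (lt_inv_comm₀ hε2 hj1).1 (lt_of_lt_of_le h1 h2)
    linarith
  exact Nat.lt_ceil.2 h3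

lemma euler_set_finite (d : ℕ) {ε : ℝ} (hε : 0 < ε) :
    {j : Fin d → ℕ | ε ^ 2 < ∏ k : Fin d, eulerLam r k.val (j k)}.Finite :=
  Set.Finite.subset (Finset.finite_toSet _) (euler_set_subset r d hε)

-- lower bound via unit vectors
lemma le_infoCount (hr : Monotone r) {d : ℕ} (hd : 1 ≤ d) {ε : ℝ} (hε : ε ∈ Set.Ioo (0:ℝ) 1)
    (hsm : ε ^ 2 < ((3:ℝ) ^ (2 * r (d-1) + 2))⁻¹) :
    d + 1 ≤ infoCount (eulerLam r) d ε := by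
  classical
  set S := {j : Fin d → ℕ | ε ^ 2 < ∏ k : Fin d, eulerLam r k.val (j k)} with hS
  have hfin : S.Finite := euler_set_finite r d hε.1
  set F : Finset (Fin d → ℕ) :=
    insert 0 (Finset.image (fun i : Fin d => Pi.single i 1) Finset.univ) with hF
  have hinj : Function.Injective (fun i : Fin d => Pi.single i 1 : Fin d → Fin d → ℕ) := by
    intro a b hab
    by_contra hne
    have h1 := congrFun hab a
    simp only at h1
    rw [Pi.single_eq_same, Pi.single_eq_of_ne (show a ≠ b from hne)] at h1
    exact one_ne_zero h1
  have h0 : (0 : Fin d → ℕ) ∉ Finset.image (fun i : Fin d => Pi.single i 1) Finset.univ := by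
    simp only [Finset.mem_image, Finset.mem_univ, true_and, not_exists]
    intro i hi
    have h1 := congrFun hi i
    simp only [Pi.zero_apply] at h1
    rw [Pi.single_eq_same] at h1
    exact one_ne_zero h1
  have hcard : F.card = d + 1 := by
    rw [hF, Finset.card_insert_of_notMem h0, Finset.card_image_of_injective _ hinj,
      Finset.card_univ, Fintype.card_fin]
  have hsub : ↑F ⊆ S := by
    intro j hj
    simp only [hF, Finset.coe_insert, Set.mem_insert_iff, Finset.coe_image,
      Set.mem_image, Finset.mem_coe, Finset.mem_univ] at hj
    rcases hj with rfl | ⟨i, -, rfl⟩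
    · show ε ^ 2 < _
      have : ∏ k : Fin d, eulerLam r k.val ((0 : Fin d → ℕ) k) = 1 := by
        simp [eulerLam_zero]
      rw [this]
      nlinarith [hε.1, hε.2]
    · show ε ^ 2 < _
      have hprod : ∏ k : Fin d, eulerLam r k.val ((Pi.single i 1 : Fin d → ℕ) k) = eulerLam r i.val 1 := by
        rw [Finset.prod_eq_single i]
        · rw [Pi.single_eq_same]
        · intro k _ hk
          rw [Pi.single_eq_of_ne hk, eulerLam_zero]
        · intro h; exact absurd (Finset.mem_univ i) h
      rw [hprod, eulerLam_one]
      refine lt_of_lt_of_le hsm ?_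
      apply inv_anti₀ (by positivity)
      apply pow_le_pow_right₀ (by norm_num)
      have : i.val ≤ d - 1 := by omega
      have := hr this
      omega
  calc d + 1 = F.card := hcard.symm
    _ = (↑F : Set (Fin d → ℕ)).ncard := (Set.ncard_coe_finset F).symm
    _ ≤ S.ncard := Set.ncard_le_ncard hsub hfin
    _ = infoCount (eulerLam r) d ε := (Nat.card_coe_set_eq S).symm

-- lower bound for d = 1
lemma le_infoCount_one (N : ℕ) {ε : ℝ} (hε : 0 < ε)
    (hsm : ε ^ 2 < ((2*(N:ℝ)+1) ^ (2 * r 0 + 2))⁻¹) :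
    N + 1 ≤ infoCount (eulerLam r) 1 ε := by
  classical
  set S := {j : Fin 1 → ℕ | ε ^ 2 < ∏ k : Fin 1, eulerLam r k.val (j k)} with hS
  have hfin : S.Finite := euler_set_finite r 1 hε
  set F : Finset (Fin 1 → ℕ) :=
    Finset.image (fun n : ℕ => (fun _ => n : Fin 1 → ℕ)) (Finset.range (N+1)) with hF
  have hinj : Function.Injective (fun n : ℕ => (fun _ => n : Fin 1 → ℕ)) := by
    intro a b hab; exact congrFun hab 0
  have hcard : F.card = N + 1 := by
    rw [hF, Finset.card_image_of_injective _ hinj, Finset.card_range]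
  have hsub : ↑F ⊆ S := by
    intro j hj
    simp only [hF, Finset.coe_image, Set.mem_image, Finset.mem_coe, Finset.mem_range] at hj
    obtain ⟨n, hn, rfl⟩ := hj
    show ε ^ 2 < _
    have : ∏ k : Fin 1, eulerLam r k.val n = eulerLam r 0 n := by
      rw [Fin.prod_univ_one]; rfl
    rw [this]
    refine lt_of_lt_of_le hsm ?_
    unfold eulerLam
    apply inv_anti₀ (by positivity)
    apply pow_le_pow_left₀ (by positivity)
    have : (n:ℝ) ≤ (N:ℝ) := by exact_mod_cast Nat.lt_succ_iff.1 hn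
    linarith
  calc N + 1 = F.card := hcard.symm
    _ = (↑F : Set (Fin 1 → ℕ)).ncard := (Set.ncard_coe_finset F).symm
    _ ≤ S.ncard := Set.ncard_le_ncard hsub hfin
    _ = infoCount (eulerLam r) 1 ε := (Nat.card_coe_set_eq S).symm

lemma summable_col {s : ℝ} (hs : 1 < s) :
    Summable (fun j : ℕ => (2*(j:ℝ)+1) ^ (-s)) := by
  have h1 : Summable (fun j : ℕ => ((j:ℝ)+1) ^ (-s)) := by
    have h0 : Summable (fun j : ℕ => (j:ℝ) ^ (-s)) :=
      Real.summable_nat_rpow.2 (by linarith)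
    have := (summable_nat_add_iff (f := fun j : ℕ => (j:ℝ) ^ (-s)) 1).2 h0
    refine this.congr fun j => ?_
    push_cast; ring_nf
  refine Summable.of_nonneg_of_le (fun j => by positivity) (fun j => ?_) h1
  have hj : (0:ℝ) ≤ (j:ℝ) := Nat.cast_nonneg _
  rw [Real.rpow_neg (by positivity), Real.rpow_neg (by positivity)]
  exact inv_anti₀ (Real.rpow_pos_of_pos (by positivity : (0:ℝ) < (j:ℝ)+1) s)
    (Real.rpow_le_rpow (by positivity) (by linarith) (by linarith))

lemma tail_le {s₀ s : ℝ} (hs₀ : 1 < s₀) (hs : s₀ ≤ s) :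
    ∑' j : ℕ, (2*((j:ℝ)+1)+1) ^ (-s) ≤
      ((3:ℝ) ^ s₀ * ∑' j : ℕ, (2*((j:ℝ)+1)+1) ^ (-s₀)) * (3:ℝ) ^ (-s) := by
  have hsum0 : Summable (fun j : ℕ => (2*((j:ℝ)+1)+1) ^ (-s₀)) := by
    have := (summable_nat_add_iff (f := fun j : ℕ => (2*(j:ℝ)+1) ^ (-s₀)) 1).2
      (summable_col hs₀)
    refine this.congr fun j => ?_; push_cast; ring_nf
  have hsums : Summable (fun j : ℕ => (2*((j:ℝ)+1)+1) ^ (-s)) := by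
    have := (summable_nat_add_iff (f := fun j : ℕ => (2*(j:ℝ)+1) ^ (-s)) 1).2
      (summable_col (lt_of_lt_of_le hs₀ hs))
    refine this.congr fun j => ?_; push_cast; ring_nf
  have key : ∀ j : ℕ, (2*((j:ℝ)+1)+1) ^ (-s) ≤
      (2*((j:ℝ)+1)+1) ^ (-s₀) * ((3:ℝ) ^ s₀ * (3:ℝ) ^ (-s)) := by
    intro j
    have hb : (3:ℝ) ≤ 2*((j:ℝ)+1)+1 := by
      have := Nat.cast_nonneg (α := ℝ) j; linarith
    have hbpos : (0:ℝ) < 2*((j:ℝ)+1)+1 := by linarith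
    have e1 : (2*((j:ℝ)+1)+1) ^ (-s) = (2*((j:ℝ)+1)+1) ^ (-s₀) * (2*((j:ℝ)+1)+1) ^ (-(s-s₀)) := by
      rw [← Real.rpow_add hbpos]; ring_nf
    rw [e1]
    have e2 : ((3:ℝ)) ^ s₀ * (3:ℝ) ^ (-s) = (3:ℝ) ^ (-(s-s₀)) := by
      rw [← Real.rpow_add (by norm_num)]; ring_nf
    rw [e2]
    have h3 : (2*((j:ℝ)+1)+1) ^ (-(s-s₀)) ≤ (3:ℝ) ^ (-(s-s₀)) := by
      rw [Real.rpow_neg (by norm_num : (0:ℝ) ≤ 3), Real.rpow_neg hbpos.le]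
      exact inv_anti₀ (Real.rpow_pos_of_pos (by norm_num) (s - s₀))
        (Real.rpow_le_rpow (by norm_num) hb (by linarith))
    exact mul_le_mul_of_nonneg_left h3 (Real.rpow_pos_of_pos hbpos _).le
  calc ∑' j : ℕ, (2*((j:ℝ)+1)+1) ^ (-s)
      ≤ ∑' j : ℕ, (2*((j:ℝ)+1)+1) ^ (-s₀) * ((3:ℝ) ^ s₀ * (3:ℝ) ^ (-s)) :=
        Summable.tsum_le_tsum key hsums (hsum0.mul_right _)
    _ = ((3:ℝ) ^ s₀ * ∑' j : ℕ, (2*((j:ℝ)+1)+1) ^ (-s₀)) * (3:ℝ) ^ (-s) := by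
        rw [tsum_mul_right]; ring

lemma colsum_le {s₀ s : ℝ} (hs₀ : 1 < s₀) (hs : s₀ ≤ s) :
    ∑' j : ℕ, (2*(j:ℝ)+1) ^ (-s) ≤
      1 + ((3:ℝ) ^ s₀ * ∑' j : ℕ, (2*((j:ℝ)+1)+1) ^ (-s₀)) * (3:ℝ) ^ (-s) := by
  have hsum : Summable (fun j : ℕ => (2*(j:ℝ)+1) ^ (-s)) := summable_col (lt_of_lt_of_le hs₀ hs)
  rw [Summable.tsum_eq_zero_add hsum]
  have h0 : (2*((0:ℕ):ℝ)+1) ^ (-s) = 1 := by norm_num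
  rw [h0]
  gcongr
  calc ∑' j : ℕ, (2*((j+1:ℕ):ℝ)+1) ^ (-s) = ∑' j : ℕ, (2*((j:ℝ)+1)+1) ^ (-s) := by
        apply tsum_congr; intro j; push_cast; ring_nf
    _ ≤ _ := tail_le hs₀ hs

lemma eulerLam_rpow {p : ℝ} (hp : 0 < p) (k m : ℕ) :
    eulerLam r k m ^ (p/2) = (2*(m:ℝ)+1) ^ (-(p * ((r k:ℝ)+1))) := by
  unfold eulerLam
  have hb : (0:ℝ) < 2*(m:ℝ)+1 := by positivity
  rw [← Real.rpow_natCast (2*(m:ℝ)+1) (2 * r k + 2), ← Real.rpow_neg hb.le,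
    ← Real.rpow_mul hb.le]
  congr 1
  push_cast
  ring

set_option maxHeartbeats 800000 in
lemma infoCount_upper (hr : Monotone r) {p : ℝ} (hp0 : 1 < p * ((r 0:ℝ)+1))
    (hsum : Summable (fun k : ℕ => (3:ℝ) ^ (-(p * ((r k:ℝ)+1))))) :
    ∃ C : ℝ, 0 ≤ C ∧ ∀ d : ℕ, 1 ≤ d → ∀ ε : ℝ, ε ∈ Set.Ioo (0:ℝ) 1 →
      (infoCount (eulerLam r) d ε : ℝ) ≤ C * ε ^ (-p) := by
  set s : ℕ → ℝ := fun k => p * ((r k:ℝ)+1) with hs_def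
  have hr0 : (0:ℝ) < (r 0:ℝ) + 1 := by positivity
  have hp : 0 < p := by nlinarith
  have hs_mono : ∀ k, s 0 ≤ s k := by
    intro k
    have : (r 0 : ℝ) ≤ (r k : ℝ) := by exact_mod_cast hr (Nat.zero_le k)
    have : (r 0 : ℝ) + 1 ≤ (r k : ℝ) + 1 := by linarith
    exact mul_le_mul_of_nonneg_left this hp.le
  have hs0 : 1 < s 0 := hp0
  set K : ℝ := (3:ℝ) ^ (s 0) * ∑' j : ℕ, (2*((j:ℝ)+1)+1) ^ (-(s 0)) with hK_def
  have hK : 0 ≤ K := by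
    apply mul_nonneg (Real.rpow_pos_of_pos (by norm_num) _).le
    exact tsum_nonneg fun j => (Real.rpow_pos_of_pos (by positivity) _).le
  set D : ℝ := K * ∑' k : ℕ, (3:ℝ) ^ (-(s k)) with hD_def
  refine ⟨Real.exp D, (Real.exp_pos D).le, ?_⟩
  intro d hd ε hε
  set S := {j : Fin d → ℕ | ε ^ 2 < ∏ k : Fin d, eulerLam r k.val (j k)} with hS_def
  have hfin : S.Finite := euler_set_finite r d hε.1
  -- claim 1 : pointwise bound
  have claim1 : ∀ j ∈ S, ε ^ p ≤ ∏ k : Fin d, (2*((j k:ℕ):ℝ)+1) ^ (-(s k.val)) := by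
    intro j hj
    have hj' : ε ^ 2 ≤ ∏ k : Fin d, eulerLam r k.val (j k) := le_of_lt hj
    have h1 : (ε ^ 2 : ℝ) ^ (p/2) ≤ (∏ k : Fin d, eulerLam r k.val (j k)) ^ (p/2) :=
      Real.rpow_le_rpow (by positivity) hj' (by positivity)
    have h2 : (ε ^ 2 : ℝ) ^ (p/2) = ε ^ p := by
      rw [← Real.rpow_natCast ε 2, ← Real.rpow_mul hε.1.le]
      congr 1; ring
    have h3 : (∏ k : Fin d, eulerLam r k.val (j k)) ^ (p/2)
        = ∏ k : Fin d, (2*((j k:ℕ):ℝ)+1) ^ (-(s k.val)) := by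
      rw [← Real.finset_prod_rpow _ _ (fun k _ => (eulerLam_pos r _ _).le)]
      exact Finset.prod_congr rfl fun k _ => eulerLam_rpow r hp k.val (j k)
    rw [h2, h3] at h1
    exact h1
  -- claim 2 : counting bound
  have hcolsummable : ∀ k : ℕ, Summable (fun m : ℕ => (2*(m:ℝ)+1) ^ (-(s k))) :=
    fun k => summable_col (lt_of_lt_of_le hs0 (hs_mono k))
  have claim2 : (infoCount (eulerLam r) d ε : ℝ) * ε ^ p ≤
      ∏ k : Fin d, ∑' m : ℕ, (2*(m:ℝ)+1) ^ (-(s k.val)) := by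
    have hn : infoCount (eulerLam r) d ε = hfin.toFinset.card := by
      rw [infoCount, Nat.card_coe_set_eq, Set.ncard_eq_toFinset_card _ hfin]
    set N := Nat.ceil ((ε^2)⁻¹) with hN_def
    set box : Finset (Fin d → ℕ) := Fintype.piFinset fun _ : Fin d => Finset.range N with hbox
    have hsub : hfin.toFinset ⊆ box := by
      intro j hj
      exact euler_set_subset r d hε.1 (hfin.mem_toFinset.1 hj)
    have hnonneg : ∀ (j : Fin d → ℕ), (0:ℝ) ≤ ∏ k : Fin d, (2*((j k:ℕ):ℝ)+1) ^ (-(s k.val)) :=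
      fun j => Finset.prod_nonneg fun k _ => (Real.rpow_pos_of_pos (by positivity) _).le
    calc (infoCount (eulerLam r) d ε : ℝ) * ε ^ p
        = ∑ _j ∈ hfin.toFinset, ε ^ p := by
          rw [Finset.sum_const, hn, nsmul_eq_mul]
      _ ≤ ∑ j ∈ hfin.toFinset, ∏ k : Fin d, (2*((j k:ℕ):ℝ)+1) ^ (-(s k.val)) := by
          apply Finset.sum_le_sum
          intro j hj
          exact claim1 j (hfin.mem_toFinset.1 hj)
      _ ≤ ∑ j ∈ box, ∏ k : Fin d, (2*((j k:ℕ):ℝ)+1) ^ (-(s k.val)) :=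
          Finset.sum_le_sum_of_subset_of_nonneg hsub (fun j _ _ => hnonneg j)
      _ = ∏ k : Fin d, ∑ m ∈ Finset.range N, (2*(m:ℝ)+1) ^ (-(s k.val)) :=
          (Finset.prod_univ_sum (fun _ : Fin d => Finset.range N)
            (fun k m => (2*(m:ℝ)+1) ^ (-(s k.val)))).symm
      _ ≤ ∏ k : Fin d, ∑' m : ℕ, (2*(m:ℝ)+1) ^ (-(s k.val)) := by
          apply Finset.prod_le_prod
          · intro k _
            exact Finset.sum_nonneg fun m _ => (Real.rpow_pos_of_pos (by positivity) _).le
          · intro k _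
            exact Summable.sum_le_tsum _ (fun m _ => (Real.rpow_pos_of_pos (by positivity) _).le)
              (hcolsummable k.val)
  -- claim 3 : product bound
  have claim3 : ∏ k : Fin d, (∑' m : ℕ, (2*(m:ℝ)+1) ^ (-(s k.val))) ≤ Real.exp D := by
    have hfac : ∀ k : ℕ, ∑' m : ℕ, (2*(m:ℝ)+1) ^ (-(s k)) ≤ 1 + K * (3:ℝ) ^ (-(s k)) :=
      fun k => colsum_le hs0 (hs_mono k)
    have hterm : ∀ k : ℕ, (0:ℝ) ≤ K * (3:ℝ) ^ (-(s k)) :=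
      fun k => mul_nonneg hK (Real.rpow_pos_of_pos (by norm_num) _).le
    calc ∏ k : Fin d, (∑' m : ℕ, (2*(m:ℝ)+1) ^ (-(s k.val)))
        ≤ ∏ k : Fin d, (1 + K * (3:ℝ) ^ (-(s k.val))) := by
          apply Finset.prod_le_prod
          · intro k _
            exact tsum_nonneg fun m => (Real.rpow_pos_of_pos (by positivity) _).le
          · intro k _; exact hfac k.val
      _ ≤ ∏ k : Fin d, Real.exp (K * (3:ℝ) ^ (-(s k.val))) := by
          apply Finset.prod_le_prod
          · intro k _; positivity
          · intro k _
            have := Real.add_one_le_exp (K * (3:ℝ) ^ (-(s k.val)))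
            linarith
      _ = Real.exp (∑ k : Fin d, K * (3:ℝ) ^ (-(s k.val))) := (Real.exp_sum _ _).symm
      _ ≤ Real.exp D := by
          apply Real.exp_le_exp.2
          rw [hD_def, ← Finset.mul_sum]
          apply mul_le_mul_of_nonneg_left _ hK
          rw [Fin.sum_univ_eq_sum_range (fun k => (3:ℝ) ^ (-(s k)))]
          exact Summable.sum_le_tsum _ (fun k _ => (Real.rpow_pos_of_pos (by norm_num) _).le)
            (by simpa [hs_def] using hsum)
  -- conclude
  have hεp : (0:ℝ) < ε ^ p := Real.rpow_pos_of_pos hε.1 p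
  have h1 := le_trans claim2 claim3
  have h2 : (infoCount (eulerLam r) d ε : ℝ) ≤ Real.exp D / ε ^ p := by
    rw [le_div_iff₀ hεp]; exact h1
  rw [Real.rpow_neg hε.1.le]
  calc (infoCount (eulerLam r) d ε : ℝ) ≤ Real.exp D / ε ^ p := h2
    _ = Real.exp D * (ε ^ p)⁻¹ := div_eq_mul_inv _ _

lemma tendsto_logN : Tendsto (fun N : ℕ => Real.log ((N:ℝ)+1)) atTop atTop :=
  Real.tendsto_log_atTop.comp (tendsto_atTop_add_const_right _ 1 tendsto_natCast_atTop_atTop)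

lemma summable_from_eventual {p B' : ℝ} (hp : 0 < p) (hq : 1 < p * B' * Real.log 3)
    (hev : ∀ᶠ k : ℕ in atTop, B' * Real.log ((k:ℝ)+1) ≤ (r k : ℝ)) :
    Summable (fun k : ℕ => (3:ℝ) ^ (-(p * ((r k:ℝ)+1)))) := by
  set q : ℝ := p * B' * Real.log 3 with hq_def
  obtain ⟨K₀, hK₀⟩ := eventually_atTop.1 hev
  have hgsum : Summable (fun k : ℕ => ((k:ℝ)+1) ^ (-q)) := by
    have h0 : Summable (fun k : ℕ => (k:ℝ) ^ (-q)) :=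
      Real.summable_nat_rpow.2 (by linarith)
    have := (summable_nat_add_iff (f := fun k : ℕ => (k:ℝ) ^ (-q)) 1).2 h0
    refine this.congr fun k => ?_; push_cast; ring_nf
  have hle : ∀ k : ℕ, K₀ ≤ k → (3:ℝ) ^ (-(p * ((r k:ℝ)+1))) ≤ ((k:ℝ)+1) ^ (-q) := by
    intro k hk
    have hrk := hK₀ k hk
    have hlog3 : 0 < Real.log 3 := Real.log_pos (by norm_num)
    have hlogk : 0 ≤ Real.log ((k:ℝ)+1) :=
      Real.log_nonneg (by linarith [Nat.cast_nonneg (α := ℝ) k])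
    have h1 : (3:ℝ) ^ (-(p * ((r k:ℝ)+1))) ≤ (3:ℝ) ^ (-(p * (r k:ℝ))) := by
      apply Real.rpow_le_rpow_of_exponent_le (by norm_num)
      nlinarith [Nat.cast_nonneg (α := ℝ) (r k)]
    refine h1.trans ?_
    rw [Real.rpow_def_of_pos (by norm_num : (0:ℝ) < 3),
      Real.rpow_def_of_pos (by positivity : (0:ℝ) < (k:ℝ)+1)]
    apply Real.exp_le_exp.2
    have : q * Real.log ((k:ℝ)+1) ≤ p * Real.log 3 * (r k : ℝ) := by
      rw [hq_def]
      calc p * B' * Real.log 3 * Real.log ((k:ℝ)+1)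
          = p * Real.log 3 * (B' * Real.log ((k:ℝ)+1)) := by ring
        _ ≤ p * Real.log 3 * (r k : ℝ) := by
            apply mul_le_mul_of_nonneg_left hrk (by positivity)
    nlinarith
  have hshift : Summable (fun k : ℕ => (3:ℝ) ^ (-(p * ((r (k + K₀):ℝ)+1)))) := by
    apply Summable.of_nonneg_of_le (fun k => (Real.rpow_pos_of_pos (by norm_num) _).le)
      (fun k => hle (k + K₀) (Nat.le_add_left _ _))
    exact (summable_nat_add_iff K₀).2 hgsum
  exact (summable_nat_add_iff K₀).1 hshift

-- square of the special epsilon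
lemma eps_sq {x a : ℝ} (hx : 1 ≤ x) {n : ℕ} (hn : (n:ℝ) = 2 * a) (ha : 0 ≤ a) :
    (x ^ (-a) / 2) ^ 2 < (x ^ n)⁻¹ := by
  have hxpos : (0:ℝ) < x := by linarith
  have h1 : (x ^ (-a) / 2) ^ 2 = x ^ (-(2*a)) / 4 := by
    rw [div_pow, ← Real.rpow_natCast (x ^ (-a)) 2, ← Real.rpow_mul hxpos.le]
    norm_num
    congr 1
    ring
  have h2 : ((x:ℝ) ^ n)⁻¹ = x ^ (-(2*a)) := by
    rw [← Real.rpow_natCast x n, ← Real.rpow_neg hxpos.le, hn]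
  rw [h1, h2]
  have h3 : (0:ℝ) < x ^ (-(2*a)) := Real.rpow_pos_of_pos hxpos _
  linarith
lemma eps_mem {x a : ℝ} (hx : 1 ≤ x) (ha : 0 ≤ a) : x ^ (-a) / 2 ∈ Set.Ioo (0:ℝ) 1 := by
  constructor
  · have := Real.rpow_pos_of_pos (show (0:ℝ) < x by linarith) (-a); linarith
  · have h1 : x ^ (-a) ≤ 1 := Real.rpow_le_one_of_one_le_of_nonpos hx (by linarith)
    linarith

-- the log inequality extracted from the SPT-type bound
lemma log_ineq {C p x a : ℝ} (hC : 1 ≤ C) (hx : 1 ≤ x) (ha : 0 ≤ a) {n : ℝ}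
    (hn : 0 < n) (h : n ≤ C * (x ^ (-a) / 2) ^ (-p)) :
    Real.log n ≤ Real.log C + p * Real.log 2 + p * a * Real.log x := by
  have hxpos : (0:ℝ) < x := by linarith
  have hε : (0:ℝ) < x ^ (-a) / 2 := (eps_mem hx ha).1
  have hC0 : (0:ℝ) < C := by linarith
  have h1 : Real.log n ≤ Real.log (C * (x ^ (-a) / 2) ^ (-p)) :=
    Real.log_le_log hn h
  rw [Real.log_mul (ne_of_gt hC0) (ne_of_gt (Real.rpow_pos_of_pos hε _)),
    Real.log_rpow hε, Real.log_div (ne_of_gt (Real.rpow_pos_of_pos hxpos _)) (by norm_num),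
    Real.log_rpow hxpos] at h1
  calc Real.log n ≤ Real.log C + -p * (-a * Real.log x - Real.log 2) := h1
    _ ≤ Real.log C + p * Real.log 2 + p * a * Real.log x := le_of_eq (by ring)

lemma p_lower1 {C p : ℝ} (hp : 0 ≤ p)
    (h : ∀ d : ℕ, 1 ≤ d → ∀ ε : ℝ, ε ∈ Set.Ioo (0:ℝ) 1 →
      (infoCount (eulerLam r) d ε : ℝ) ≤ C * ε ^ (-p)) :
    1 / ((r 0:ℝ)+1) ≤ p := by
  set C' : ℝ := max C 1 with hC'
  have hC1 : (1:ℝ) ≤ C' := le_max_right _ _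
  have h' : ∀ N : ℕ, ((N:ℝ) + 1) ≤ C' * ((2*(N:ℝ)+1) ^ (-((r 0:ℝ)+1)) / 2) ^ (-p) := by
    intro N
    set ε : ℝ := (2*(N:ℝ)+1) ^ (-((r 0:ℝ)+1)) / 2 with hε_def
    have hb : (1:ℝ) ≤ 2*(N:ℝ)+1 := by
      have := Nat.cast_nonneg (α := ℝ) N; linarith
    have hmem : ε ∈ Set.Ioo (0:ℝ) 1 := eps_mem hb (by positivity)
    have hsm : ε ^ 2 < ((2*(N:ℝ)+1) ^ (2 * r 0 + 2))⁻¹ :=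
      eps_sq hb (by push_cast; ring) (by positivity)
    have hcount := le_infoCount_one r N hmem.1 hsm
    have h1 : ((N:ℝ) + 1) ≤ (infoCount (eulerLam r) 1 ε : ℝ) := by exact_mod_cast hcount
    have h2 := h 1 le_rfl ε hmem
    have h3 : C * ε ^ (-p) ≤ C' * ε ^ (-p) :=
      mul_le_mul_of_nonneg_right (le_max_left _ _) (Real.rpow_pos_of_pos hmem.1 _).le
    linarith
  -- extract log inequality
  have hlog : ∀ N : ℕ, Real.log ((N:ℝ)+1) ≤
      Real.log C' + p * Real.log 2 + p * ((r 0:ℝ)+1) * Real.log (2*(N:ℝ)+1) := by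
    intro N
    have hb : (1:ℝ) ≤ 2*(N:ℝ)+1 := by
      have := Nat.cast_nonneg (α := ℝ) N; linarith
    exact log_ineq hC1 hb (by positivity) (by positivity) (h' N)
  -- log (2N+1) ≤ log 2 + log (N+1)
  have hlog2 : ∀ N : ℕ, Real.log (2*(N:ℝ)+1) ≤ Real.log 2 + Real.log ((N:ℝ)+1) := by
    intro N
    have hN : (0:ℝ) ≤ (N:ℝ) := Nat.cast_nonneg _
    rw [← Real.log_mul (by norm_num) (by positivity)]
    apply Real.log_le_log (by linarith)
    linarith
  set a : ℝ := p * ((r 0:ℝ)+1) with ha_def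
  have ha0 : 0 ≤ a := by positivity
  have key : ∀ N : ℕ, (1 - a) * Real.log ((N:ℝ)+1) ≤
      Real.log C' + p * Real.log 2 + a * Real.log 2 := by
    intro N
    have h1 := hlog N
    have h2 := hlog2 N
    have hlogN : 0 ≤ Real.log ((N:ℝ)+1) :=
      Real.log_nonneg (by linarith [Nat.cast_nonneg (α := ℝ) N])
    nlinarith
  by_contra hcon
  push_neg at hcon
  have hr0 : (0:ℝ) < (r 0:ℝ) + 1 := by positivity
  have ha1 : a < 1 := by
    rw [ha_def]
    calc p * ((r 0:ℝ)+1) < (1 / ((r 0:ℝ)+1)) * ((r 0:ℝ)+1) := by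
          apply mul_lt_mul_of_pos_right hcon hr0
      _ = 1 := by field_simp
  set c0 : ℝ := Real.log C' + p * Real.log 2 + a * Real.log 2 with hc0
  obtain ⟨N, hN⟩ := (tendsto_logN.eventually_gt_atTop (c0 / (1 - a))).exists
  have := key N
  rw [div_lt_iff₀ (by linarith)] at hN
  linarith

lemma liminf_lower (hr : Monotone r) {C p : ℝ} (hp : 0 < p)
    (h : ∀ d : ℕ, 1 ≤ d → ∀ ε : ℝ, ε ∈ Set.Ioo (0:ℝ) 1 →
      (infoCount (eulerLam r) d ε : ℝ) ≤ C * ε ^ (-p)) :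
    ((1 / (p * Real.log 3) : ℝ) : EReal) ≤
      Filter.liminf (fun k : ℕ => (((r k : ℝ) / Real.log ((k:ℝ)+1) : ℝ) : EReal)) Filter.atTop := by
  set C' : ℝ := max C 1 with hC'
  have hC1 : (1:ℝ) ≤ C' := le_max_right _ _
  have hlog3 : 0 < Real.log 3 := Real.log_pos (by norm_num)
  -- key pointwise inequality
  have hkey : ∀ k : ℕ, Real.log ((k:ℝ)+2) ≤
      Real.log C' + p * Real.log 2 + p * ((r k:ℝ)+1) * Real.log 3 := by
    intro k
    set ε : ℝ := (3:ℝ) ^ (-((r k:ℝ)+1)) / 2 with hε_def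
    have hb : (1:ℝ) ≤ (3:ℝ) := by norm_num
    have hmem : ε ∈ Set.Ioo (0:ℝ) 1 := eps_mem hb (by positivity)
    have hsm : ε ^ 2 < ((3:ℝ) ^ (2 * r ((k+1)-1) + 2))⁻¹ := by
      simp only [Nat.add_sub_cancel]
      exact eps_sq hb (by push_cast; ring) (by positivity)
    have hcount := le_infoCount r hr (Nat.le_add_left 1 k) hmem hsm
    have h1 : ((k:ℝ) + 2) ≤ (infoCount (eulerLam r) (k+1) ε : ℝ) := by
      have : ((k + 1 + 1 : ℕ) : ℝ) ≤ (infoCount (eulerLam r) (k+1) ε : ℝ) := by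
        exact_mod_cast hcount
      push_cast at this; linarith
    have h2 := h (k+1) (Nat.le_add_left 1 k) ε hmem
    have h3 : C * ε ^ (-p) ≤ C' * ε ^ (-p) :=
      mul_le_mul_of_nonneg_right (le_max_left _ _) (Real.rpow_pos_of_pos hmem.1 _).le
    have h4 : ((k:ℝ) + 2) ≤ C' * ε ^ (-p) := by linarith
    exact log_ineq hC1 hb (by positivity) (by positivity) h4
  -- conclude
  set L := Filter.liminf (fun k : ℕ => (((r k : ℝ) / Real.log ((k:ℝ)+1) : ℝ) : EReal)) Filter.atTop
    with hL_def
  set c : ℝ := 1 / (p * Real.log 3) with hc_def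
  by_contra hlt
  push_neg at hlt
  obtain ⟨b, hLb, hbc⟩ := EReal.exists_between_coe_real hlt
  rw [EReal.coe_lt_coe_iff] at hbc
  have hble : (b : EReal) ≤ L := by
    refine Filter.le_liminf_of_le (by isBoundedDefault) ?_
    set c2 : ℝ := (Real.log C' + p * Real.log 2) / (p * Real.log 3) + 1 with hc2
    have hev1 : ∀ᶠ k : ℕ in atTop, c2 / (c - b) ≤ Real.log ((k:ℝ)+1) :=
      tendsto_logN.eventually_ge_atTop _
    have hev2 : ∀ᶠ k : ℕ in atTop, 1 ≤ k := eventually_ge_atTop 1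
    filter_upwards [hev1, hev2] with k hk1 hk2
    have hlogpos : 0 < Real.log ((k:ℝ)+1) := by
      apply Real.log_pos
      have : (1:ℝ) ≤ (k:ℝ) := by exact_mod_cast hk2
      linarith
    have hP : 0 < p * Real.log 3 := by positivity
    have hrk : c * Real.log ((k:ℝ)+1) - c2 ≤ (r k : ℝ) := by
      have h5 := hkey k
      have h6 : Real.log ((k:ℝ)+1) ≤ Real.log ((k:ℝ)+2) :=
        Real.log_le_log (by positivity) (by linarith)
      have hPc : (p * Real.log 3) * c = 1 := by
        rw [hc_def]; field_simp
      have hPc2 : (p * Real.log 3) * c2 = Real.log C' + p * Real.log 2 + p * Real.log 3 := by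
        rw [hc2]; field_simp; try ring
      rw [← mul_le_mul_iff_right₀ hP]
      nlinarith [h5, h6, hPc, hPc2]
    have hcb : 0 < c - b := by linarith
    have hc2le : c2 ≤ (c - b) * Real.log ((k:ℝ)+1) := by
      rw [div_le_iff₀ hcb] at hk1
      nlinarith
    have hblog : b * Real.log ((k:ℝ)+1) ≤ (r k : ℝ) := by nlinarith
    have : b ≤ (r k : ℝ) / Real.log ((k:ℝ)+1) := (le_div_iff₀ hlogpos).2 hblog
    exact_mod_cast EReal.coe_le_coe_iff.2 this
  exact absurd hLb (not_lt.2 hble)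

lemma exists_bound (hr : Monotone r)
    (hL : 0 < Filter.liminf (fun k : ℕ => (((r k : ℝ) / Real.log ((k:ℝ)+1) : ℝ) : EReal)) Filter.atTop)
    {p : ℝ}
    (hpM : max (2 / (2 * Real.log 3 *
        (Filter.liminf (fun k : ℕ => (((r k : ℝ) / Real.log ((k:ℝ)+1) : ℝ) : EReal)) Filter.atTop).toReal))
      (1 / ((r 0:ℝ)+1)) < p) :
    ∃ C : ℝ, 0 ≤ C ∧ ∀ d : ℕ, 1 ≤ d → ∀ ε : ℝ, ε ∈ Set.Ioo (0:ℝ) 1 →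
      (infoCount (eulerLam r) d ε : ℝ) ≤ C * ε ^ (-p) := by
  set L := Filter.liminf (fun k : ℕ => (((r k : ℝ) / Real.log ((k:ℝ)+1) : ℝ) : EReal)) Filter.atTop
    with hLdef
  have hlog3 : 0 < Real.log 3 := Real.log_pos (by norm_num)
  have hr0 : (0:ℝ) < (r 0:ℝ) + 1 := by positivity
  obtain ⟨hpA, hpB⟩ := max_lt_iff.1 hpM
  have hp0 : 0 < p := lt_trans (by positivity) hpB
  have hp1 : 1 < p * ((r 0:ℝ)+1) := by
    rw [div_lt_iff₀ hr0] at hpB; linarith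
  have hP : 0 < p * Real.log 3 := by positivity
  -- choose B'
  obtain ⟨B', hq, hB'L⟩ : ∃ B' : ℝ, 1 < p * B' * Real.log 3 ∧ (B' : EReal) < L := by
    by_cases htop : L = ⊤
    · refine ⟨2 / (p * Real.log 3), ?_, ?_⟩
      · have : p * (2 / (p * Real.log 3)) * Real.log 3 = 2 := by
          field_simp
        rw [this]; norm_num
      · rw [htop]; exact EReal.coe_lt_top _
    · have hnb : L ≠ ⊥ := ne_bot_of_gt hL
      set B : ℝ := L.toReal with hBdef
      have hB : 0 < B := by
        have hcoe := EReal.coe_toReal htop hnb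
        have hL' := hL
        rw [← hcoe] at hL'
        exact_mod_cast hL'
      have h2A : 2 / (2 * Real.log 3 * B) < p := hpA
      have hsimp : 2 / (2 * Real.log 3 * B) = 1 / (Real.log 3 * B) := by
        rw [show (2:ℝ) * Real.log 3 * B = 2 * (Real.log 3 * B) by ring, ← div_div]
        norm_num
      rw [hsimp, div_lt_iff₀ (by positivity)] at h2A
      have hlt1 : 1 / (p * Real.log 3) < B := by
        rw [div_lt_iff₀ hP]; nlinarith
      refine ⟨(1 / (p * Real.log 3) + B) / 2, ?_, ?_⟩
      · have h1 : 1 / (p * Real.log 3) < (1 / (p * Real.log 3) + B) / 2 := by linarith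
        rw [div_lt_iff₀ hP] at h1; nlinarith
      · have h2 : (1 / (p * Real.log 3) + B) / 2 < B := by linarith
        calc ((((1 / (p * Real.log 3) + B) / 2 : ℝ)) : EReal) < ((B:ℝ) : EReal) :=
              EReal.coe_lt_coe_iff.2 h2
          _ = L := EReal.coe_toReal htop hnb
  have hev0 : ∀ᶠ k : ℕ in atTop,
      (B' : EReal) < (((r k : ℝ) / Real.log ((k:ℝ)+1) : ℝ) : EReal) :=
    eventually_lt_of_lt_liminf hB'L (by isBoundedDefault)
  have hev : ∀ᶠ k : ℕ in atTop, B' * Real.log ((k:ℝ)+1) ≤ (r k : ℝ) := by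
    filter_upwards [hev0, eventually_ge_atTop 1] with k hk1 hk2
    have hlogpos : 0 < Real.log ((k:ℝ)+1) := by
      apply Real.log_pos
      have : (1:ℝ) ≤ (k:ℝ) := by exact_mod_cast hk2
      linarith
    have hlt : B' < (r k : ℝ) / Real.log ((k:ℝ)+1) := EReal.coe_lt_coe_iff.1 hk1
    rw [lt_div_iff₀ hlogpos] at hlt
    exact hlt.le
  exact infoCount_upper r hr hp1 (summable_from_eventual r hp0 hq hev)


end EulerAux

/-- Euler kernels, normalized error criterion: SPT iff `liminf r_k/ln k > 0`, and in that
case the exponent of SPT is `max{2/A_*, 1/(r₁+1)}` with `A_* = 2 ln 3 · liminf r_k/ln k`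
(when the liminf is `∞`, `2/A_* = 0` via `EReal.toReal ⊤ = 0` and `2/0 = 0`). -/
theorem euler_spt (r : ℕ → ℕ) (hr : Monotone r) :
    (IsSPT (eulerLam r) ↔
      0 < Filter.liminf (fun k : ℕ => ((r k : ℝ) / Real.log ((k : ℝ) + 1) : EReal))
        Filter.atTop) ∧
    (0 < Filter.liminf (fun k : ℕ => ((r k : ℝ) / Real.log ((k : ℝ) + 1) : EReal))
        Filter.atTop →
      sptExponent (eulerLam r) =
        max (2 / (2 * Real.log 3 *
          (Filter.liminf (fun k : ℕ => ((r k : ℝ) / Real.log ((k : ℝ) + 1) : EReal))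
            Filter.atTop).toReal)) (1 / ((r 0 : ℝ) + 1))) := by
  have hLc : Filter.liminf (fun k : ℕ => (((r k : ℝ) / Real.log ((k:ℝ)+1) : ℝ) : EReal))
      Filter.atTop =
      Filter.liminf (fun k : ℕ => ((r k : ℝ) / Real.log ((k : ℝ) + 1) : EReal)) Filter.atTop :=
    rfl
  set L := Filter.liminf (fun k : ℕ => ((r k : ℝ) / Real.log ((k : ℝ) + 1) : EReal))
    Filter.atTop with hLdef
  have hlog3 : 0 < Real.log 3 := Real.log_pos (by norm_num)
  have hr0 : (0:ℝ) < (r 0:ℝ) + 1 := by positivity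
  set M : ℝ := max (2 / (2 * Real.log 3 * L.toReal)) (1 / ((r 0:ℝ)+1)) with hMdef
  have hM0 : 0 < M := lt_of_lt_of_le (by positivity) (le_max_right _ _)
  constructor
  · constructor
    · rintro ⟨C, p, hC, hp, h⟩
      have h1 : 1 / ((r 0:ℝ)+1) ≤ p := p_lower1 r hp h
      have hp0 : 0 < p := lt_of_lt_of_le (by positivity) h1
      have h2 := liminf_lower r hr hp0 h
      rw [hLc] at h2
      calc (0 : EReal) < ((1 / (p * Real.log 3) : ℝ) : EReal) := by
            exact_mod_cast EReal.coe_pos.2 (by positivity)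
        _ ≤ L := h2
    · intro hL
      have hL' : 0 < Filter.liminf
          (fun k : ℕ => (((r k : ℝ) / Real.log ((k:ℝ)+1) : ℝ) : EReal)) Filter.atTop := by
        rw [hLc]; exact hL
      obtain ⟨C, hC, h⟩ := exists_bound r hr hL' (p := M + 1)
        (by rw [hLc, ← hMdef]; linarith)
      exact ⟨C, M + 1, hC, by linarith, h⟩
  · intro hL
    have hL' : 0 < Filter.liminf
        (fun k : ℕ => (((r k : ℝ) / Real.log ((k:ℝ)+1) : ℝ) : EReal)) Filter.atTop := by
      rw [hLc]; exact hL
    rw [sptExponent]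
    apply le_antisymm
    · apply le_of_forall_pos_le_add
      intro δ hδ
      apply csInf_le
      · exact ⟨0, fun q hq => hq.1⟩
      · obtain ⟨C, hC, h⟩ := exists_bound r hr hL' (p := M + δ)
          (by rw [hLc, ← hMdef]; linarith)
        exact ⟨by linarith, C, hC, h⟩
    · apply le_csInf
      · obtain ⟨C, hC, h⟩ := exists_bound r hr hL' (p := M + 1)
          (by rw [hLc, ← hMdef]; linarith)
        exact ⟨M + 1, by linarith, C, hC, h⟩
      · rintro p ⟨hp0, C, hC, h⟩
        have h1 : 1 / ((r 0:ℝ)+1) ≤ p := p_lower1 r hp0 h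
        have hp : 0 < p := lt_of_lt_of_le (by positivity) h1
        have h2 := liminf_lower r hr hp h
        rw [hLc] at h2
        rw [hMdef]
        apply max_le _ h1
        by_cases htop : L = ⊤
        · rw [htop]
          simp only [EReal.toReal_top, mul_zero, div_zero]
          exact hp.le
        · have hnb : L ≠ ⊥ := ne_bot_of_gt hL
          have hcoe := EReal.coe_toReal htop hnb
          have hB : 0 < L.toReal := by
            have hL2 := hL
            rw [← hcoe] at hL2
            exact_mod_cast hL2
          have h3 : 1 / (p * Real.log 3) ≤ L.toReal := by
            rw [← hcoe] at h2
            exact_mod_cast h2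
          have hsimp : 2 / (2 * Real.log 3 * L.toReal) = 1 / (Real.log 3 * L.toReal) := by
            rw [show (2:ℝ) * Real.log 3 * L.toReal = 2 * (Real.log 3 * L.toReal) by ring,
              ← div_div]
            norm_num
          rw [hsimp, div_le_iff₀ (by positivity)]
          rw [div_le_iff₀ (by positivity : (0:ℝ) < p * Real.log 3)] at h3
          nlinarith
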